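/- Let T be a Markov operator on L¹([0,1], λ) and let f, g : [0,1] → [0,1] be measure-preserving Borel functions such that T𝟙_{g⁻¹(B)} = 𝟙_{f⁻¹(B)} λ-a.e. for every Borel B ⊆ [0,1]. Then g⁻¹(B) ∈ σ_T and f⁻¹(B) ∈ σ*_T for every Borel B ⊆ [0,1], and both σ_T and σ*_T are non-atomic. -/

import Mathlib

open MeasureTheory Set unitInterval

noncomputable section

open Classical in
/-- The indicator function `𝟙_S` of a set `S ⊆ [0,1]`, as an element of `L¹([0,1], λ)`
(where `λ` is Lebesgue measure on the unit interval `I = [0,1]`).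
If `S` is not measurable we default to `0`. -/
def ind (S : Set I) : Lp ℝ 1 (volume : Measure I) :=
  if hS : MeasurableSet S then indicatorConstLp 1 hS (measure_ne_top _ _) (1:ℝ) else 0

/-- A Markov operator on `L¹([0,1], λ)`: a bounded linear operator `T` with
(i) `T𝟙 = 𝟙`, (ii) `∫ Tψ = ∫ ψ` for all `ψ ∈ L¹`, (iii) `Tψ ≥ 0` a.e. whenever `ψ ≥ 0` a.e. -/
structure IsMarkovOperator
    (T : Lp ℝ 1 (volume : Measure I) →L[ℝ] Lp ℝ 1 (volume : Measure I)) : Prop where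
  map_one : T (ind univ) = ind univ
  integral_map : ∀ ψ : Lp ℝ 1 (volume : Measure I), ∫ x, (T ψ) x = ∫ x, ψ x
  positive : ∀ ψ : Lp ℝ 1 (volume : Measure I), 0 ≤ᵐ[volume] ⇑ψ → 0 ≤ᵐ[volume] ⇑(T ψ)

/-- `σ_T`: the collection of Borel sets `S ⊆ [0,1]` with `T𝟙_S = 𝟙_R` (λ-a.e.) for some Borel
`R ⊆ [0,1]`.  (Equality in `L¹` is exactly λ-a.e. equality.) -/
def sigmaT (T : Lp ℝ 1 (volume : Measure I) →L[ℝ] Lp ℝ 1 (volume : Measure I)) :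
    Set (Set I) :=
  {S | MeasurableSet S ∧ ∃ R : Set I, MeasurableSet R ∧ T (ind S) = ind R}

/-- `σ*_T`: the collection of Borel sets `R ⊆ [0,1]` with `T𝟙_S = 𝟙_R` (λ-a.e.) for some Borel
`S ⊆ [0,1]`. -/
def sigmaTstar (T : Lp ℝ 1 (volume : Measure I) →L[ℝ] Lp ℝ 1 (volume : Measure I)) :
    Set (Set I) :=
  {R | MeasurableSet R ∧ ∃ S : Set I, MeasurableSet S ∧ T (ind S) = ind R}

/-- A collection `𝒮` of Borel subsets of `[0,1]` is non-atomic (w.r.t. Lebesgue measure) if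
there is no `S ∈ 𝒮` with `λ(S) > 0` such that every `E ∈ 𝒮` satisfies `λ(S ∩ E) = 0` or
`λ(S ∩ E) = λ(S)`. -/
def NonAtomicFamily (𝒮 : Set (Set I)) : Prop :=
  ¬ ∃ S ∈ 𝒮, 0 < volume S ∧ ∀ E ∈ 𝒮, volume (S ∩ E) = 0 ∨ volume (S ∩ E) = volume S

/-- Let `T` be a Markov operator on `L¹([0,1], λ)` and `f, g : [0,1] → [0,1]`
measure-preserving Borel functions with `T𝟙_{g⁻¹(B)} = 𝟙_{f⁻¹(B)}` λ-a.e. for every Borel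
`B ⊆ [0,1]`.  Then `g⁻¹(B) ∈ σ_T` and `f⁻¹(B) ∈ σ*_T` for every Borel `B ⊆ [0,1]`, and both
`σ_T` and `σ*_T` are non-atomic. -/

private lemma aux_no_atom (h : I → I) (hh : MeasurePreserving h volume volume)
    (S : Set I) (hSm : MeasurableSet S) (hpos : 0 < volume S)
    (hat : ∀ B : Set I, MeasurableSet B →
      volume (S ∩ h ⁻¹' B) = 0 ∨ volume (S ∩ h ⁻¹' B) = volume S) :
    False := by
  set μ : ℝ → ENNReal := fun t => volume (S ∩ h ⁻¹' {x : I | (x : ℝ) ≤ t}) with hμ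
  have hBmeas : ∀ t : ℝ, MeasurableSet {x : I | (x : ℝ) ≤ t} := fun t =>
    measurable_subtype_coe measurableSet_Iic
  have hmono : Monotone μ := fun s t hst =>
    measure_mono (inter_subset_inter_right _ (fun x hx => le_trans hx hst))
  have h1 : μ 1 = volume S := by
    have huniv : {x : I | (x : ℝ) ≤ (1:ℝ)} = univ := eq_univ_of_forall fun x => x.2.2
    show volume (S ∩ h ⁻¹' {x : I | (x : ℝ) ≤ (1:ℝ)}) = volume S
    rw [huniv, preimage_univ, inter_univ]
  have hdichot : ∀ t, μ t = 0 ∨ μ t = volume S := fun t => hat _ (hBmeas t)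
  set Z := {t : ℝ | μ t = 0} with hZ
  have hZne : (-1 : ℝ) ∈ Z := by
    have hemp : {x : I | (x : ℝ) ≤ (-1:ℝ)} = ∅ :=
      eq_empty_of_forall_notMem fun x hx => absurd (le_trans x.2.1 hx) (by norm_num)
    show volume (S ∩ h ⁻¹' {x : I | (x : ℝ) ≤ (-1:ℝ)}) = 0
    rw [hemp, preimage_empty, inter_empty, measure_empty]
  have hZbdd : BddAbove Z := by
    refine ⟨1, fun t ht => ?_⟩
    by_contra hlt
    push_neg at hlt
    have h2 := hmono hlt.le
    rw [h1, ht] at h2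
    exact absurd h2 (by simpa using hpos.ne')
  set c := sSup Z with hc
  have hgt : ∀ t, c < t → μ t = volume S := fun t ht =>
    (hdichot t).resolve_left fun h0 => absurd (le_csSup hZbdd h0) (not_le.mpr ht)
  have hltc : ∀ t, t < c → μ t = 0 := by
    intro t ht
    obtain ⟨s, hs, hts⟩ := exists_lt_of_lt_csSup ⟨-1, hZne⟩ ht
    exact le_antisymm (hs ▸ hmono hts.le) zero_le
  -- upper part
  have hupper : volume (S ∩ h ⁻¹' {x : I | (x : ℝ) ≤ c}) = volume S := by
    have heq : (⋂ n : ℕ, S ∩ h ⁻¹' {x : I | (x : ℝ) ≤ c + 1/(n+1)})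
        = S ∩ h ⁻¹' {x : I | (x : ℝ) ≤ c} := by
      ext x
      simp only [mem_iInter, mem_inter_iff, mem_preimage, mem_setOf_eq]
      constructor
      · intro hx
        refine ⟨(hx 0).1, le_of_forall_pos_le_add fun ε hε => ?_⟩
        obtain ⟨n, hn⟩ := exists_nat_one_div_lt hε
        exact le_trans (hx n).2 (by linarith)
      · intro hx n
        refine ⟨hx.1, le_trans hx.2 ?_⟩
        have : (0:ℝ) ≤ 1/(n+1) := by positivity
        linarith
    have hanti : Antitone fun n : ℕ => S ∩ h ⁻¹' {x : I | (x : ℝ) ≤ c + 1/(n+1)} := by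
      intro n m hnm
      refine inter_subset_inter_right _ (preimage_mono fun x hx => ?_)
      simp only [mem_setOf_eq] at hx ⊢
      have h1 : (1:ℝ)/(m+1) ≤ 1/(n+1) := by
        apply one_div_le_one_div_of_le
        · positivity
        · exact_mod_cast by exact_mod_cast add_le_add_left (Nat.cast_le.mpr hnm) 1
      linarith
    have hmeas : ∀ n : ℕ, NullMeasurableSet
        (S ∩ h ⁻¹' {x : I | (x : ℝ) ≤ c + 1/(n+1)}) volume := fun n =>
      (hSm.inter (hh.measurable (hBmeas _))).nullMeasurableSet
    rw [← heq, (hanti.directed_ge).measure_iInter hmeas ⟨0, measure_ne_top _ _⟩]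
    have hconst : ∀ n : ℕ, volume (S ∩ h ⁻¹' {x : I | (x : ℝ) ≤ c + 1/(n+1)}) = volume S := by
      intro n
      have hp : (0:ℝ) < 1/(n+1) := by positivity
      exact hgt _ (by linarith)
    simp only [hconst, iInf_const]
  -- lower part
  have hlower : volume (S ∩ h ⁻¹' {x : I | (x : ℝ) < c}) = 0 := by
    have hsub : S ∩ h ⁻¹' {x : I | (x : ℝ) < c}
        ⊆ ⋃ n : ℕ, S ∩ h ⁻¹' {x : I | (x : ℝ) ≤ c - 1/(n+1)} := by
      rintro x ⟨hxS, hxc⟩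
      simp only [mem_preimage, mem_setOf_eq] at hxc
      obtain ⟨n, hn⟩ := exists_nat_one_div_lt (K := ℝ) (sub_pos.mpr hxc)
      exact mem_iUnion.mpr ⟨n, hxS, by simp only [mem_preimage, mem_setOf_eq]; linarith⟩
    refine measure_mono_null hsub (measure_iUnion_null fun n => hltc _ ?_)
    have : (0:ℝ) < 1/(n+1) := by positivity
    linarith
  -- the singleton fiber
  have hsing : volume ((Subtype.val ⁻¹' {c}) : Set I) = 0 := by
    have hre : (volume : Measure I) = (volume : Measure ℝ).comap Subtype.val := rfl
    rw [hre, MeasurableEmbedding.comap_apply (MeasurableEmbedding.subtype_coe measurableSet_Icc)]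
    exact measure_mono_null (image_preimage_subset _ _) (measure_singleton c)
  have hfiber : volume (h ⁻¹' ((Subtype.val ⁻¹' {c}) : Set I)) = 0 := by
    rw [hh.measure_preimage ((measurable_subtype_coe (measurableSet_singleton c)).nullMeasurableSet)]
    exact hsing
  have hsplit : S ∩ h ⁻¹' {x : I | (x : ℝ) ≤ c}
      ⊆ (S ∩ h ⁻¹' {x : I | (x : ℝ) < c}) ∪ h ⁻¹' ((Subtype.val ⁻¹' {c}) : Set I) := by
    rintro x ⟨hxS, hxc⟩
    simp only [mem_preimage, mem_setOf_eq] at hxc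
    rcases lt_or_eq_of_le hxc with hlt | heq
    · exact Or.inl ⟨hxS, hlt⟩
    · exact Or.inr (by simpa using heq)
  have hcontr : volume S ≤ 0 := by
    calc volume S = volume (S ∩ h ⁻¹' {x : I | (x : ℝ) ≤ c}) := hupper.symm
    _ ≤ volume ((S ∩ h ⁻¹' {x : I | (x : ℝ) < c}) ∪ h ⁻¹' ((Subtype.val ⁻¹' {c}) : Set I)) :=
        measure_mono hsplit
    _ ≤ volume (S ∩ h ⁻¹' {x : I | (x : ℝ) < c}) + volume (h ⁻¹' ((Subtype.val ⁻¹' {c}) : Set I)) :=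
        measure_union_le _ _
    _ = 0 := by rw [hlower, hfiber, add_zero]
  exact absurd (le_antisymm hcontr zero_le) hpos.ne'

theorem stmt9
    (T : Lp ℝ 1 (volume : Measure I) →L[ℝ] Lp ℝ 1 (volume : Measure I))
    (hT : IsMarkovOperator T) (f g : I → I)
    (hf : MeasurePreserving f volume volume) (hg : MeasurePreserving g volume volume)
    (h : ∀ B : Set I, MeasurableSet B → T (ind (g ⁻¹' B)) = ind (f ⁻¹' B)) :
    (∀ B : Set I, MeasurableSet B → g ⁻¹' B ∈ sigmaT T ∧ f ⁻¹' B ∈ sigmaTstar T) ∧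
    NonAtomicFamily (sigmaT T) ∧ NonAtomicFamily (sigmaTstar T) := by
  have hmem : ∀ B : Set I, MeasurableSet B → g ⁻¹' B ∈ sigmaT T ∧ f ⁻¹' B ∈ sigmaTstar T := by
    intro B hB
    exact ⟨⟨hg.measurable hB, f ⁻¹' B, hf.measurable hB, h B hB⟩,
      ⟨hf.measurable hB, g ⁻¹' B, hg.measurable hB, h B hB⟩⟩
  refine ⟨hmem, ?_, ?_⟩
  · rintro ⟨S, hS, hSpos, hatom⟩
    exact aux_no_atom g hg S hS.1 hSpos fun B hB => hatom _ (hmem B hB).1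
  · rintro ⟨S, hS, hSpos, hatom⟩
    exact aux_no_atom f hf S hS.1 hSpos fun B hB => hatom _ (hmem B hB).2
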